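/- The map M ↦ z^{dev(M)}·M is a bijection from the set of standard R-submodules of O onto the set of R-submodules M' ⊆ O with dim_k(O/M') = δ (equivalently, of deviation 0). If moreover Γ is symmetric (c = 2δ), then every R-submodule M' ⊆ O with dim_k(O/M') = δ contains z^{2δ}·O. -/

import Mathlib

open PowerSeries

/-- `ν f = n` : the order of the power series `f` equals `n`. -/
def HasOrd {k : Type*} [Semiring k] (f : PowerSeries k) (n : ℕ) : Prop :=
  PowerSeries.coeff n f ≠ 0 ∧ ∀ m < n, PowerSeries.coeff m f = 0

/-- The set of orders of the nonzero elements of `S ⊆ k[[z]]`. -/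
def ValSet {k : Type*} [Semiring k] (S : Set (PowerSeries k)) : Set ℕ :=
  {n | ∃ f ∈ S, HasOrd f n}

namespace Dev

variable {k : Type*} [Field k]

theorem hasOrd_ne_zero {f : PowerSeries k} {n : ℕ} (h : HasOrd f n) : f ≠ 0 := by
  intro hf; exact h.1 (by simp [hf])

theorem hasOrd_unique {f : PowerSeries k} {a b : ℕ} (ha : HasOrd f a) (hb : HasOrd f b) :
    a = b := by
  by_contra hne
  rcases Nat.lt_or_ge a b with h | h
  · exact ha.1 (hb.2 a h)
  · exact hb.1 (ha.2 b (lt_of_le_of_ne h (Ne.symm hne)))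

open Classical in
theorem exists_hasOrd {f : PowerSeries k} (hf : f ≠ 0) : ∃ n, HasOrd f n := by
  have hex : ∃ n, PowerSeries.coeff n f ≠ 0 := by
    by_contra h
    push_neg at h
    exact hf (PowerSeries.ext fun n => h n)
  exact ⟨Nat.find hex, Nat.find_spec hex, fun m hm => by
    have := Nat.find_min hex hm; simpa using this⟩

theorem hasOrd_mul {f g : PowerSeries k} {a b : ℕ} (hf : HasOrd f a) (hg : HasOrd g b) :
    HasOrd (f * g) (a + b) := by
  constructor
  · rw [PowerSeries.coeff_mul]
    rw [Finset.sum_eq_single (a, b)]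
    · exact mul_ne_zero hf.1 hg.1
    · rintro ⟨i, j⟩ hij hne
      rw [Finset.HasAntidiagonal.mem_antidiagonal] at hij
      rcases Nat.lt_or_ge i a with h | h
      · rw [hf.2 i h, zero_mul]
      · rcases Nat.lt_or_ge j b with h' | h'
        · rw [hg.2 j h', mul_zero]
        · exfalso; apply hne
          have : i = a := by omega
          have : j = b := by omega
          simp_all
    · intro h; simp [Finset.mem_antidiagonal] at h
  · intro n hn
    rw [PowerSeries.coeff_mul]
    apply Finset.sum_eq_zero
    rintro ⟨i, j⟩ hij
    rw [Finset.HasAntidiagonal.mem_antidiagonal] at hij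
    rcases Nat.lt_or_ge i a with h | h
    · rw [hf.2 i h, zero_mul]
    · rw [hg.2 j (by omega), mul_zero]

theorem hasOrd_X_pow (n : ℕ) : HasOrd (PowerSeries.X ^ n : PowerSeries k) n := by
  constructor
  · rw [PowerSeries.coeff_X_pow]; simp
  · intro m hm; rw [PowerSeries.coeff_X_pow]; simp [Nat.ne_of_lt hm]

theorem hasOrd_one : HasOrd (1 : PowerSeries k) 0 :=
  ⟨by simp, fun m hm => by omega⟩

theorem hasOrd_X_pow_mul {f : PowerSeries k} {a : ℕ} (hf : HasOrd f a) (n : ℕ) :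
    HasOrd (PowerSeries.X ^ n * f) (n + a) :=
  hasOrd_mul (hasOrd_X_pow n) hf

theorem X_pow_ne_zero (n : ℕ) : (PowerSeries.X ^ n : PowerSeries k) ≠ 0 :=
  hasOrd_ne_zero (hasOrd_X_pow n)

theorem X_pow_cancel {n : ℕ} {f g : PowerSeries k}
    (h : PowerSeries.X ^ n * f = PowerSeries.X ^ n * g) : f = g :=
  mul_left_cancel₀ (X_pow_ne_zero n) h

/-- decomposition `f = X^d * u` with `u` of order 0 and `u * u⁻¹ = 1`. -/
theorem exists_unit_factor {f : PowerSeries k} {d : ℕ} (hf : HasOrd f d) :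
    ∃ u : PowerSeries k, f = PowerSeries.X ^ d * u ∧ HasOrd u 0 ∧ u * u⁻¹ = 1 := by
  have hdvd : (PowerSeries.X : PowerSeries k) ^ d ∣ f :=
    PowerSeries.X_pow_dvd_iff.2 fun m hm => hf.2 m hm
  obtain ⟨u, hu⟩ := hdvd
  have hc : PowerSeries.coeff 0 u ≠ 0 := by
    intro h0
    apply hf.1
    rw [hu]
    rw [PowerSeries.coeff_mul, Finset.sum_eq_single (d, 0)]
    · rw [h0, mul_zero]
    · rintro ⟨i, j⟩ hij hne
      rw [Finset.HasAntidiagonal.mem_antidiagonal] at hij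
      rcases eq_or_ne i d with rfl | hid
      · exfalso; apply hne; simp [show j = 0 by omega]
      · rw [PowerSeries.coeff_X_pow]; simp [hid]
    · intro h; simp [Finset.mem_antidiagonal] at h
  refine ⟨u, hu, ⟨by simpa using hc, fun m hm => by omega⟩, ?_⟩
  exact PowerSeries.mul_inv_cancel u (by simpa [PowerSeries.coeff_zero_eq_constantCoeff] using hc)

open Classical in
noncomputable def gapFinset (S : Set (PowerSeries k)) (N : ℕ) : Finset ℕ :=
  (Finset.range N).filter (· ∉ ValSet S)

theorem mem_valSet_of_ge {S : Set (PowerSeries k)} {N : ℕ}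
    (hN : ∀ f, PowerSeries.X ^ N * f ∈ S) {n : ℕ} (hn : N ≤ n) : n ∈ ValSet S := by
  refine ⟨PowerSeries.X ^ N * PowerSeries.X ^ (n - N), hN _, ?_⟩
  have h := hasOrd_X_pow_mul (hasOrd_X_pow (k := k) (n - N)) N
  rwa [Nat.add_sub_cancel' hn] at h

theorem valSet_compl_eq {S : Set (PowerSeries k)} {N : ℕ}
    (hN : ∀ f, PowerSeries.X ^ N * f ∈ S) :
    (ValSet S)ᶜ = ↑(gapFinset S N) := by
  ext n
  simp only [Set.mem_compl_iff, gapFinset, Finset.coe_filter, Finset.mem_range,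
    Set.mem_setOf_eq]
  constructor
  · intro h
    refine ⟨?_, h⟩
    by_contra hn
    exact h (mem_valSet_of_ge hN (by omega))
  · exact fun h => h.2

theorem spanning {M : Submodule k (PowerSeries k)} {N : ℕ}
    (hN : ∀ f, PowerSeries.X ^ N * f ∈ M) (f : PowerSeries k) :
    f ∈ M ⊔ Submodule.span k
      ((fun n => (PowerSeries.X : PowerSeries k) ^ n) ''
        ↑(gapFinset (M : Set (PowerSeries k)) N)) := by
  set S := M ⊔ Submodule.span k
      ((fun n => (PowerSeries.X : PowerSeries k) ^ n) ''
        ↑(gapFinset (M : Set (PowerSeries k)) N)) with hS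
  suffices h : ∀ t (f : PowerSeries k), (∀ j < N - t, PowerSeries.coeff j f = 0) → f ∈ S by
    exact h N f (fun j hj => by omega)
  intro t
  induction t with
  | zero =>
    intro f hf
    obtain ⟨g, rfl⟩ : (PowerSeries.X : PowerSeries k) ^ N ∣ f :=
      PowerSeries.X_pow_dvd_iff.2 fun m hm => hf m (by omega)
    exact Submodule.mem_sup_left (hN g)
  | succ t ih =>
    intro f hf
    by_cases hle : N ≤ t
    · exact ih f fun j hj => hf j (by omega)
    · set i := N - (t + 1) with hi
      by_cases hiv : i ∈ ValSet (M : Set (PowerSeries k))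
      · obtain ⟨g, hgM, hg⟩ := hiv
        set c := PowerSeries.coeff i f * (PowerSeries.coeff i g)⁻¹ with hc
        have h1 : f - c • g ∈ S := by
          apply ih
          intro j hj
          rcases Nat.lt_or_ge j i with h | h
          · simp only [map_sub, LinearMap.map_smul, smul_eq_mul]
            rw [hf j (by omega), hg.2 j h, mul_zero, sub_zero]
          · have hji : j = i := by omega
            subst hji
            simp only [map_sub, LinearMap.map_smul, smul_eq_mul]
            rw [hc, mul_assoc, inv_mul_cancel₀ hg.1, mul_one, sub_self]
        have h2 : c • g ∈ S := Submodule.mem_sup_left (M.smul_mem c hgM)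
        have := S.add_mem h1 h2
        rwa [sub_add_cancel] at this
      · have hiG : i ∈ gapFinset (M : Set (PowerSeries k)) N := by
          simp only [gapFinset, Finset.mem_filter, Finset.mem_range]
          exact ⟨by omega, hiv⟩
        set c := PowerSeries.coeff i f with hc
        have h1 : f - c • PowerSeries.X ^ i ∈ S := by
          apply ih
          intro j hj
          simp only [map_sub, LinearMap.map_smul, smul_eq_mul, PowerSeries.coeff_X_pow]
          rcases Nat.lt_or_ge j i with h | h
          · rw [hf j (by omega)]; simp [Nat.ne_of_lt h]
          · have hji : j = i := by omega
            subst hji; simp [hc]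
        have h2 : c • (PowerSeries.X : PowerSeries k) ^ i ∈ S := by
          apply Submodule.mem_sup_right
          exact Submodule.smul_mem _ c (Submodule.subset_span ⟨i, hiG, rfl⟩)
        have := S.add_mem h1 h2
        rwa [sub_add_cancel] at this

theorem count_lemma (M : Submodule k (PowerSeries k)) (N : ℕ)
    (hN : ∀ f, PowerSeries.X ^ N * f ∈ M) :
    Module.Finite k (PowerSeries k ⧸ M) ∧
    Module.finrank k (PowerSeries k ⧸ M)
      = ((ValSet (M : Set (PowerSeries k)))ᶜ).ncard := by
  classical
  set G := gapFinset (M : Set (PowerSeries k)) N with hG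
  set v : ↥G → PowerSeries k := fun n => PowerSeries.X ^ (n : ℕ) with hv
  set b : ↥G → PowerSeries k ⧸ M := fun n => Submodule.Quotient.mk (v n) with hb
  have hcoeffp : ∀ (l : ↥G →₀ k) (j : ℕ),
      PowerSeries.coeff j (Finsupp.linearCombination k v l)
        = if h : j ∈ G then l ⟨j, h⟩ else 0 := by
    intro l j
    rw [Finsupp.linearCombination_apply, Finsupp.sum, map_sum]
    by_cases h : j ∈ G
    · rw [dif_pos h]
      rw [Finset.sum_eq_single (⟨j, h⟩ : ↥G)]
      · simp [v, PowerSeries.coeff_X_pow]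
      · intro a _ hne
        have : (a : ℕ) ≠ j := fun hh => hne (by ext; exact hh)
        simp [v, PowerSeries.coeff_X_pow, this.symm]
      · intro hns
        simp [Finsupp.notMem_support_iff.1 hns]
    · rw [dif_neg h]
      apply Finset.sum_eq_zero
      intro a _
      have : (a : ℕ) ≠ j := fun hh => h (hh ▸ a.2)
      simp [v, PowerSeries.coeff_X_pow, this.symm]
  have hli : LinearIndependent k b := by
    rw [linearIndependent_iff]
    intro l hl
    have hmk : M.mkQ (Finsupp.linearCombination k v l) = 0 := by
      rw [Finsupp.apply_linearCombination]
      exact hl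
    have hpM : Finsupp.linearCombination k v l ∈ M :=
      (Submodule.Quotient.mk_eq_zero M).1 hmk
    by_contra hl0
    obtain ⟨n, hn⟩ : ∃ n, l n ≠ 0 := by
      by_contra hh; push_neg at hh; exact hl0 (Finsupp.ext hh)
    have hp0 : Finsupp.linearCombination k v l ≠ 0 := by
      intro h0
      apply hn
      have := hcoeffp l n
      rw [h0, map_zero, dif_pos n.2] at this
      simpa using this.symm
    obtain ⟨j, hj⟩ := exists_hasOrd hp0
    have hjG : j ∈ G := by
      by_contra hjn
      exact hj.1 (by rw [hcoeffp l j, dif_neg hjn])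
    have : j ∉ ValSet (M : Set (PowerSeries k)) := by
      have := (Finset.mem_filter.1 (hG ▸ hjG)).2
      simpa using this
    exact this ⟨_, hpM, hj⟩
  have hspan : ⊤ ≤ Submodule.span k (Set.range b) := by
    intro x _
    obtain ⟨f, rfl⟩ := Submodule.Quotient.mk_surjective M x
    have hf := spanning hN f
    have : Submodule.Quotient.mk f ∈ Submodule.map M.mkQ
        (M ⊔ Submodule.span k
          ((fun n => (PowerSeries.X : PowerSeries k) ^ n) '' ↑G)) :=
      ⟨f, hf, rfl⟩
    rw [Submodule.map_sup, Submodule.map_span] at this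
    have hMbot : Submodule.map M.mkQ M = ⊥ := by
      rw [eq_bot_iff]
      rintro x ⟨y, hy, rfl⟩
      simpa [Submodule.mkQ_apply, Submodule.Quotient.mk_eq_zero] using
        (Submodule.Quotient.mk_eq_zero M).2 hy
    rw [hMbot, bot_sup_eq] at this
    have himg : ⇑M.mkQ '' ((fun n => (PowerSeries.X : PowerSeries k) ^ n) '' ↑G)
        = Set.range b := by
      have h1 : (fun n => (PowerSeries.X : PowerSeries k) ^ n) '' ↑G = Set.range v := by
        ext x
        simp [hv, Subtype.exists]
      rw [h1, ← Set.range_comp]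
      rfl
    rw [himg] at this
    exact this
  have basis : Module.Basis ↥G k (PowerSeries k ⧸ M) := Module.Basis.mk hli hspan
  have hfin : Module.Finite k (PowerSeries k ⧸ M) :=
    Module.Finite.of_basis basis
  refine ⟨hfin, ?_⟩
  rw [Module.finrank_eq_card_basis basis, valSet_compl_eq hN, Set.ncard_coe_finset]
  exact Fintype.card_coe G

theorem mem_map_mulLeft {M : Submodule k (PowerSeries k)} {d : ℕ} {x : PowerSeries k} :
    x ∈ Submodule.map (LinearMap.mulLeft k (PowerSeries.X ^ d)) M
      ↔ ∃ f ∈ M, PowerSeries.X ^ d * f = x := by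
  simp [Submodule.mem_map, LinearMap.mulLeft_apply]

theorem valSet_map_mulLeft (M : Submodule k (PowerSeries k)) (d : ℕ) :
    ValSet ((Submodule.map (LinearMap.mulLeft k (PowerSeries.X ^ d)) M : Submodule k _) :
        Set (PowerSeries k))
      = {n | d ≤ n ∧ n - d ∈ ValSet (M : Set (PowerSeries k))} := by
  ext n
  constructor
  · rintro ⟨g, hg, hgn⟩
    obtain ⟨f, hf, rfl⟩ := mem_map_mulLeft.1 hg
    have hf0 : f ≠ 0 := by
      intro h; subst h
      exact hasOrd_ne_zero hgn (by simp)
    obtain ⟨a, ha⟩ := exists_hasOrd hf0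
    have hord := hasOrd_X_pow_mul ha d
    have hn : n = d + a := hasOrd_unique hgn hord
    exact ⟨by omega, by rw [hn, Nat.add_sub_cancel_left]; exact ⟨f, hf, ha⟩⟩
  · rintro ⟨hdn, g, hg, hgn⟩
    refine ⟨PowerSeries.X ^ d * g, mem_map_mulLeft.2 ⟨g, hg, rfl⟩, ?_⟩
    have hord := hasOrd_X_pow_mul hgn d
    rwa [Nat.add_sub_cancel' hdn] at hord

theorem ncard_compl_shift {Δ : Set ℕ} (hfin : Δᶜ.Finite) (d : ℕ) :
    ({n | d ≤ n ∧ n - d ∈ Δ}ᶜ).ncard = d + Δᶜ.ncard := by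
  have hset : {n | d ≤ n ∧ n - d ∈ Δ}ᶜ = Set.Iio d ∪ (fun a => a + d) '' Δᶜ := by
    ext n
    simp only [Set.mem_compl_iff, Set.mem_setOf_eq, Set.mem_union, Set.mem_Iio,
      Set.mem_image, not_and]
    constructor
    · intro h
      rcases Nat.lt_or_ge n d with h' | h'
      · exact Or.inl h'
      · exact Or.inr ⟨n - d, h h', by omega⟩
    · rintro (h | ⟨a, ha, rfl⟩)
      · intro h'; omega
      · intro _; rwa [Nat.add_sub_cancel]
  have hdisj : Disjoint (Set.Iio d) ((fun a => a + d) '' Δᶜ) := by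
    rw [Set.disjoint_left]
    rintro x hx ⟨a, _, rfl⟩
    simp only [Set.mem_Iio] at hx; omega
  rw [hset, Set.ncard_union_eq hdisj (Set.finite_Iio d) (hfin.image _)]
  rw [Set.ncard_image_of_injective _ (add_left_injective d)]
  have : (Set.Iio d).ncard = d := by
    rw [← Finset.coe_Iio, Set.ncard_coe_finset, Nat.card_Iio]
  omega

theorem map_comap_mulLeft {M' : Submodule k (PowerSeries k)} {d : ℕ}
    (h : ∀ f ∈ M', ∀ j < d, PowerSeries.coeff j f = 0) :
    Submodule.map (LinearMap.mulLeft k (PowerSeries.X ^ d))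
      (Submodule.comap (LinearMap.mulLeft k (PowerSeries.X ^ d)) M') = M' := by
  ext x
  rw [mem_map_mulLeft]
  constructor
  · rintro ⟨f, hf, rfl⟩
    exact hf
  · intro hx
    obtain ⟨f, rfl⟩ : (PowerSeries.X : PowerSeries k) ^ d ∣ x :=
      PowerSeries.X_pow_dvd_iff.2 fun j hj => h x hx j hj
    exact ⟨f, by simpa [Submodule.mem_comap, LinearMap.mulLeft_apply] using hx, rfl⟩

theorem li_X_pow (n : ℕ) :
    LinearIndependent k (fun i : Fin n => (PowerSeries.X : PowerSeries k) ^ (i : ℕ)) := by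
  rw [Fintype.linearIndependent_iff]
  intro g hg i
  have hcg := congrArg (PowerSeries.coeff (i : ℕ)) hg
  rw [map_sum, map_zero] at hcg
  rw [Finset.sum_eq_single i] at hcg
  · simpa [PowerSeries.coeff_X_pow] using hcg
  · intro j _ hji
    have : (j : ℕ) ≠ (i : ℕ) := fun hh => hji (Fin.ext hh)
    simp [PowerSeries.coeff_X_pow, this.symm]
  · simp

theorem stable_contains {R : Subalgebra k (PowerSeries k)} {m : ℕ}
    (hRm : ∀ f : PowerSeries k, PowerSeries.X ^ m * f ∈ R)
    {M : Submodule k (PowerSeries k)}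
    (hR : ∀ r ∈ R, ∀ f ∈ M, r * f ∈ M) {u : PowerSeries k} {d : ℕ}
    (hu : u ∈ M) (hud : HasOrd u d) (f : PowerSeries k) :
    PowerSeries.X ^ (m + d) * f ∈ M := by
  obtain ⟨w, hw, hw0, hwinv⟩ := exists_unit_factor hud
  have key : (PowerSeries.X ^ m * (f * w⁻¹)) * u = PowerSeries.X ^ (m + d) * f := by
    calc (PowerSeries.X ^ m * (f * w⁻¹)) * u
        = PowerSeries.X ^ (m + d) * f * (w * w⁻¹) := by rw [hw, pow_add]; ring
      _ = PowerSeries.X ^ (m + d) * f := by rw [hwinv, mul_one]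
  have := hR _ (hRm (f * w⁻¹)) u hu
  rwa [key] at this

end Dev

open Dev

/-- Let `R ⊆ O = k[[z]]` be a `k`-subalgebra containing `z^m·O`, with value
semigroup `Γ`, genus `δ` and conductor `c`.  The map `M ↦ z^{dev(M)}·M` is a bijection from
the set of standard `R`-submodules of `O` onto the set of `R`-submodules `M'` with
`dim_k(O/M') = δ` (deviation `0`).  Moreover, if `Γ` is symmetric (`c = 2δ`), then every
such `M'` contains `z^{2δ}·O`. -/
theorem dev_shift_bijection
    {k : Type*} [Field k]
    (R : Subalgebra k (PowerSeries k)) (m : ℕ) (hm : 1 ≤ m)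
    (hRm : ∀ f : PowerSeries k, PowerSeries.X ^ m * f ∈ R) :
    Set.BijOn
      (fun M : Submodule k (PowerSeries k) =>
        Submodule.map
          (LinearMap.mulLeft k
            (PowerSeries.X ^ (((ValSet (R : Set (PowerSeries k)))ᶜ).ncard
              - Module.finrank k (PowerSeries k ⧸ M)))) M)
      {M : Submodule k (PowerSeries k) |
        (∀ r ∈ R, ∀ f ∈ M, r * f ∈ M) ∧
        ValSet (R : Set (PowerSeries k)) ⊆ ValSet (M : Set (PowerSeries k))}
      {M' : Submodule k (PowerSeries k) |
        (∀ r ∈ R, ∀ f ∈ M', r * f ∈ M') ∧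
        Module.Finite k (PowerSeries k ⧸ M') ∧
        Module.finrank k (PowerSeries k ⧸ M')
          = ((ValSet (R : Set (PowerSeries k)))ᶜ).ncard} ∧
    (sInf {c : ℕ | ∀ n, c ≤ n → n ∈ ValSet (R : Set (PowerSeries k))}
        = 2 * ((ValSet (R : Set (PowerSeries k)))ᶜ).ncard →
      ∀ M' : Submodule k (PowerSeries k),
        (∀ r ∈ R, ∀ f ∈ M', r * f ∈ M') →
        Module.Finite k (PowerSeries k ⧸ M') →
        Module.finrank k (PowerSeries k ⧸ M')
          = ((ValSet (R : Set (PowerSeries k)))ᶜ).ncard →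
        ∀ f : PowerSeries k,
          PowerSeries.X ^ (2 * ((ValSet (R : Set (PowerSeries k)))ᶜ).ncard) * f ∈ M') := by
  classical
  set Γ : Set ℕ := ValSet (R : Set (PowerSeries k)) with hΓdef
  set δ : ℕ := (Γᶜ).ncard with hδdef
  have hΓ0 : (0 : ℕ) ∈ Γ := ⟨1, R.one_mem, hasOrd_one⟩
  have hRset : ∀ f, PowerSeries.X ^ m * f ∈ (R : Set (PowerSeries k)) := hRm
  have hΓfin : (Γᶜ).Finite := by
    rw [hΓdef, valSet_compl_eq hRset]; exact (gapFinset _ m).finite_toSet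
  refine ⟨⟨?_, ?_, ?_⟩, ?_⟩
  · -- MapsTo
    rintro M ⟨hstab, hΓΔ⟩
    obtain ⟨u0, hu0M, hu00⟩ := hΓΔ hΓ0
    have hMm : ∀ f, PowerSeries.X ^ m * f ∈ M := by
      have h := stable_contains hRm hstab hu0M hu00
      simpa using h
    obtain ⟨hMfin, hMrk⟩ := count_lemma M m hMm
    have hΔMfin : ((ValSet (M : Set (PowerSeries k)))ᶜ).Finite := by
      rw [valSet_compl_eq hMm]; exact (gapFinset _ m).finite_toSet
    have hdegle : ((ValSet (M : Set (PowerSeries k)))ᶜ).ncard ≤ δ := by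
      rw [hδdef]
      exact Set.ncard_le_ncard (Set.compl_subset_compl.2 hΓΔ) hΓfin
    set dev := δ - Module.finrank k (PowerSeries k ⧸ M) with hdev
    have hM2m : ∀ f, PowerSeries.X ^ (m + dev) * f ∈
        Submodule.map (LinearMap.mulLeft k (PowerSeries.X ^ dev)) M := fun f =>
      mem_map_mulLeft.2 ⟨PowerSeries.X ^ m * f, hMm f, by rw [pow_add]; ring⟩
    simp only [Set.mem_setOf_eq]
    refine ⟨?_, (count_lemma _ (m + dev) hM2m).1, ?_⟩
    · intro r hr f hf
      obtain ⟨g, hg, rfl⟩ := mem_map_mulLeft.1 hf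
      exact mem_map_mulLeft.2 ⟨r * g, hstab r hr g hg, by ring⟩
    · obtain ⟨_, hrk2⟩ := count_lemma _ (m + dev) hM2m
      rw [hrk2, valSet_map_mulLeft, ncard_compl_shift hΔMfin dev]
      rw [hMrk] at hdev
      omega
  · -- InjOn
    rintro M1 ⟨hstab1, hΓΔ1⟩ M2 ⟨hstab2, hΓΔ2⟩ heq
    dsimp only at heq
    set d1 := δ - Module.finrank k (PowerSeries k ⧸ M1) with hd1
    set d2 := δ - Module.finrank k (PowerSeries k ⧸ M2) with hd2
    have h0Δ1 : (0 : ℕ) ∈ ValSet (M1 : Set (PowerSeries k)) := hΓΔ1 hΓ0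
    have h0Δ2 : (0 : ℕ) ∈ ValSet (M2 : Set (PowerSeries k)) := hΓΔ2 hΓ0
    have hd1mem : d1 ∈ ValSet
        ((Submodule.map (LinearMap.mulLeft k (PowerSeries.X ^ d1)) M1 :
          Submodule k (PowerSeries k)) : Set (PowerSeries k)) := by
      rw [valSet_map_mulLeft]
      exact ⟨le_rfl, by simpa using h0Δ1⟩
    have hd2mem : d2 ∈ ValSet
        ((Submodule.map (LinearMap.mulLeft k (PowerSeries.X ^ d2)) M2 :
          Submodule k (PowerSeries k)) : Set (PowerSeries k)) := by
      rw [valSet_map_mulLeft]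
      exact ⟨le_rfl, by simpa using h0Δ2⟩
    rw [heq, valSet_map_mulLeft] at hd1mem
    rw [← heq, valSet_map_mulLeft] at hd2mem
    have hdd : d1 = d2 := le_antisymm hd2mem.1 hd1mem.1
    ext f
    constructor
    · intro hf
      have h1 : PowerSeries.X ^ d1 * f ∈
          Submodule.map (LinearMap.mulLeft k (PowerSeries.X ^ d1)) M1 :=
        mem_map_mulLeft.2 ⟨f, hf, rfl⟩
      rw [heq] at h1
      obtain ⟨g, hg, hgeq⟩ := mem_map_mulLeft.1 h1
      rw [← hdd] at hgeq
      rwa [← X_pow_cancel hgeq]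
    · intro hf
      have h1 : PowerSeries.X ^ d2 * f ∈
          Submodule.map (LinearMap.mulLeft k (PowerSeries.X ^ d2)) M2 :=
        mem_map_mulLeft.2 ⟨f, hf, rfl⟩
      rw [← heq] at h1
      obtain ⟨g, hg, hgeq⟩ := mem_map_mulLeft.1 h1
      rw [hdd] at hgeq
      rwa [← X_pow_cancel hgeq]
  · -- SurjOn
    rintro M' ⟨hstab', hfin', hrk'⟩
    haveI := hfin'
    have hbot : M' ≠ ⊥ := by
      rintro rfl
      have li := (li_X_pow (k := k) (δ + 1)).map'
        (⊥ : Submodule k (PowerSeries k)).mkQ (Submodule.ker_mkQ ⊥)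
      have hcard := li.fintype_card_le_finrank
      rw [hrk'] at hcard
      simp only [Fintype.card_fin] at hcard
      omega
    obtain ⟨f1, hf1M, hf10⟩ := (Submodule.ne_bot_iff M').1 hbot
    have hne : (ValSet (M' : Set (PowerSeries k))).Nonempty := by
      obtain ⟨n, hn⟩ := exists_hasOrd hf10
      exact ⟨n, f1, hf1M, hn⟩
    set d := sInf (ValSet (M' : Set (PowerSeries k))) with hd
    obtain ⟨f0, hf0M, hf0d⟩ := Nat.sInf_mem hne
    have hlow : ∀ f ∈ M', ∀ j < d, PowerSeries.coeff j f = 0 := by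
      intro f hf j hj
      by_cases hfz : f = 0
      · simp [hfz]
      obtain ⟨a, ha⟩ := exists_hasOrd hfz
      have hda : d ≤ a := Nat.sInf_le ⟨f, hf, ha⟩
      exact ha.2 j (by omega)
    set M := Submodule.comap (LinearMap.mulLeft k (PowerSeries.X ^ d)) M' with hM
    have hmap : Submodule.map (LinearMap.mulLeft k (PowerSeries.X ^ d)) M = M' :=
      map_comap_mulLeft hlow
    have hmemM : ∀ f : PowerSeries k, f ∈ M ↔ PowerSeries.X ^ d * f ∈ M' := by
      intro f
      rw [hM, Submodule.mem_comap, LinearMap.mulLeft_apply]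
    have hstabM : ∀ r ∈ R, ∀ f ∈ M, r * f ∈ M := by
      intro r hr f hf
      rw [hmemM] at hf ⊢
      have he : PowerSeries.X ^ d * (r * f) = r * (PowerSeries.X ^ d * f) := by ring
      rw [he]
      exact hstab' r hr _ hf
    obtain ⟨w, hw_eq, hw0, hwinv⟩ := exists_unit_factor hf0d
    have hwM : w ∈ M := by rw [hmemM, ← hw_eq]; exact hf0M
    have hΓΔM : Γ ⊆ ValSet (M : Set (PowerSeries k)) := by
      rintro s ⟨r, hrR, hrs⟩
      exact ⟨r * w, hstabM r hrR w hwM, by simpa using hasOrd_mul hrs hw0⟩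
    have hMm : ∀ f, PowerSeries.X ^ m * f ∈ M := by
      have h := stable_contains hRm hstabM hwM hw0
      simpa using h
    obtain ⟨hMfin, hMrk⟩ := count_lemma M m hMm
    have hM'c : ∀ f, PowerSeries.X ^ (m + d) * f ∈ M' := fun f => by
      rw [← hmap]
      exact mem_map_mulLeft.2 ⟨PowerSeries.X ^ m * f, hMm f, by rw [pow_add]; ring⟩
    obtain ⟨_, hM'rk⟩ := count_lemma M' (m + d) hM'c
    have hΔMfin : ((ValSet (M : Set (PowerSeries k)))ᶜ).Finite := by
      rw [valSet_compl_eq hMm]; exact (gapFinset _ m).finite_toSet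
    have hcount : δ = d + ((ValSet (M : Set (PowerSeries k)))ᶜ).ncard := by
      rw [← hrk', hM'rk, ← hmap, valSet_map_mulLeft, ncard_compl_shift hΔMfin]
    refine ⟨M, ⟨hstabM, hΓΔM⟩, ?_⟩
    show Submodule.map
      (LinearMap.mulLeft k
        (PowerSeries.X ^ (δ - Module.finrank k (PowerSeries k ⧸ M)))) M = M'
    rw [show δ - Module.finrank k (PowerSeries k ⧸ M) = d by rw [hMrk]; omega]
    exact hmap
  · -- Part 2
    intro _hsym M' hstab' hfin' hrk' f
    haveI := hfin'
    have hbot : M' ≠ ⊥ := by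
      rintro rfl
      have li := (li_X_pow (k := k) (δ + 1)).map'
        (⊥ : Submodule k (PowerSeries k)).mkQ (Submodule.ker_mkQ ⊥)
      have hcard := li.fintype_card_le_finrank
      rw [hrk'] at hcard
      simp only [Fintype.card_fin] at hcard
      omega
    obtain ⟨f1, hf1M, hf10⟩ := (Submodule.ne_bot_iff M').1 hbot
    have hne : (ValSet (M' : Set (PowerSeries k))).Nonempty := by
      obtain ⟨n, hn⟩ := exists_hasOrd hf10
      exact ⟨n, f1, hf1M, hn⟩
    set d := sInf (ValSet (M' : Set (PowerSeries k))) with hd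
    obtain ⟨f0, hf0M, hf0d⟩ := Nat.sInf_mem hne
    have hM'c : ∀ g, PowerSeries.X ^ (m + d) * g ∈ M' :=
      stable_contains hRm hstab' hf0M hf0d
    obtain ⟨_, hM'rk⟩ := count_lemma M' (m + d) hM'c
    have hΔ' : ((ValSet (M' : Set (PowerSeries k)))ᶜ).ncard = δ := by
      rw [← hM'rk, hrk']
    have hΔ'fin : ((ValSet (M' : Set (PowerSeries k)))ᶜ).Finite := by
      rw [valSet_compl_eq hM'c]; exact (gapFinset _ (m + d)).finite_toSet
    have hΓstabΔ : ∀ s ∈ Γ, ∀ n ∈ ValSet (M' : Set (PowerSeries k)),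
        s + n ∈ ValSet (M' : Set (PowerSeries k)) := by
      rintro s ⟨r, hrR, hrs⟩ n ⟨g, hgM, hgn⟩
      exact ⟨r * g, hstab' r hrR g hgM, hasOrd_mul hrs hgn⟩
    have hgap : ∀ n, n ∉ ValSet (M' : Set (PowerSeries k)) → n < 2 * δ := by
      intro n hn
      set A : Set ℕ := {x | x ≤ n ∧ x ∈ Γ} with hA
      set B : Set ℕ := {x | x ≤ n ∧ x ∉ Γ} with hB
      have hAle : A.ncard ≤ δ := by
        have himg : (fun x => n - x) '' A ⊆ (ValSet (M' : Set (PowerSeries k)))ᶜ := by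
          rintro _ ⟨x, ⟨hxn, hxΓ⟩, rfl⟩
          intro hmem
          apply hn
          have h := hΓstabΔ x hxΓ (n - x) hmem
          rwa [Nat.add_sub_cancel' hxn] at h
        have hinj : Set.InjOn (fun x => n - x) A := by
          rintro x ⟨hx1, _⟩ y ⟨hy1, _⟩ hxy
          simp only at hxy
          omega
        calc A.ncard = ((fun x => n - x) '' A).ncard := (Set.ncard_image_of_injOn hinj).symm
          _ ≤ ((ValSet (M' : Set (PowerSeries k)))ᶜ).ncard :=
            Set.ncard_le_ncard himg hΔ'fin
          _ = δ := hΔ'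
      have hBle : B.ncard ≤ δ := by
        rw [hδdef]
        exact Set.ncard_le_ncard (fun x hx => hx.2) hΓfin
      have hunion : Set.Iic n = A ∪ B := by
        ext x
        simp only [Set.mem_Iic, hA, hB, Set.mem_union, Set.mem_setOf_eq]
        by_cases hx : x ∈ Γ <;> simp [hx] <;> tauto
      have hIic : (Set.Iic n).ncard = n + 1 := by
        rw [← Finset.coe_Iic, Set.ncard_coe_finset, Nat.card_Iic]
      have hle := Set.ncard_union_le A B
      rw [← hunion, hIic] at hle
      omega
    have hΔ'ge : ∀ n, 2 * δ ≤ n → n ∈ ValSet (M' : Set (PowerSeries k)) := by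
      intro n h
      by_contra hc
      have := hgap n hc
      omega
    have haux : ∀ t n, 2 * δ ≤ n → m + d ≤ n + t →
        ∀ h : PowerSeries k, PowerSeries.X ^ n * h ∈ M' := by
      have hbase : ∀ n, m + d ≤ n → ∀ h : PowerSeries k,
          PowerSeries.X ^ n * h ∈ M' := by
        intro n hn h
        obtain ⟨e, rfl⟩ : ∃ e, n = m + d + e := ⟨n - (m + d), by omega⟩
        rw [pow_add, mul_assoc]
        exact hM'c _
      intro t
      induction t with
      | zero => intro n _ hmd h; exact hbase n (by omega) h
      | succ t ih =>
        intro n h2δ hmd h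
        by_cases hb : m + d ≤ n
        · exact hbase n hb h
        · have ih1 : ∀ g : PowerSeries k, PowerSeries.X ^ (n + 1) * g ∈ M' :=
            fun g => ih (n + 1) (by omega) (by omega) g
          obtain ⟨g, hgM, hg⟩ := hΔ'ge n h2δ
          set c := PowerSeries.coeff n g with hc
          obtain ⟨g1, hg1⟩ : (PowerSeries.X : PowerSeries k) ^ (n + 1) ∣
              (g - c • PowerSeries.X ^ n) := by
            refine PowerSeries.X_pow_dvd_iff.2 fun j hj => ?_
            simp only [map_sub, LinearMap.map_smul, smul_eq_mul, PowerSeries.coeff_X_pow]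
            rcases Nat.lt_or_ge j n with h' | h'
            · rw [hg.2 j h']; simp [Nat.ne_of_lt h']
            · have : j = n := by omega
              subst this; simp [hc]
          have hXn : (PowerSeries.X : PowerSeries k) ^ n ∈ M' := by
            have h2 : g - c • PowerSeries.X ^ n ∈ M' := by
              rw [hg1]; exact ih1 g1
            have h3 : c • (PowerSeries.X : PowerSeries k) ^ n ∈ M' := by
              have h4 := M'.sub_mem hgM h2
              rwa [sub_sub_cancel] at h4
            have h5 := M'.smul_mem c⁻¹ h3
            rwa [smul_smul, inv_mul_cancel₀ hg.1, one_smul] at h5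
          obtain ⟨h1', hh1⟩ : (PowerSeries.X : PowerSeries k) ∣
              (h - PowerSeries.C (PowerSeries.constantCoeff h)) :=
            PowerSeries.X_dvd_iff.2 (by simp)
          have hdec : PowerSeries.X ^ n * h
              = (PowerSeries.constantCoeff h) • PowerSeries.X ^ n
                + PowerSeries.X ^ (n + 1) * h1' := by
            have he : PowerSeries.X ^ (n + 1) * h1'
                = PowerSeries.X ^ n * (PowerSeries.X * h1') := by ring
            rw [he, ← hh1, PowerSeries.smul_eq_C_mul]
            ring
          rw [hdec]
          exact M'.add_mem (M'.smul_mem _ hXn) (ih1 h1')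
    exact haux (m + d) (2 * δ) le_rfl (by omega) f
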